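/- Let M be a matroid such that whenever C₁, C₂ are circuits, the symmetric difference C₁ △ C₂ is empty or contains a circuit. Then M has no circuit C and cocircuit D with |C ∩ D| = 3. -/

import Mathlib

open Set

namespace Matroid

variable {α : Type*}

/-- A circuit of a matroid is a minimal dependent set. -/
def Circuit (M : Matroid α) (C : Set α) : Prop :=
  M.Dep C ∧ ∀ D, M.Dep D → D ⊆ C → D = C

/-- A cocircuit is a circuit of the dual matroid. -/
def Cocircuit (M : Matroid α) (D : Set α) : Prop := M✶.Circuit D

/-- The matroid obtained by deleting the set `D`. -/
def delete' (M : Matroid α) (D : Set α) : Matroid α := M ↾ (M.E \ D)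

/-- The matroid obtained by contracting the set `C`. -/
def contract' (M : Matroid α) (C : Set α) : Matroid α := ((M✶).delete' C)✶

/-- `N` is a minor of `M` if it is obtained from `M` by contracting a set `C`
and deleting a set `D`, where `C` and `D` are disjoint subsets of the ground set. -/
def IsMinor' (N M : Matroid α) : Prop :=
  ∃ C D, Disjoint C D ∧ C ∪ D ⊆ M.E ∧ N = (M.contract' C).delete' D

/-- A scrawl is a union of circuits. -/
def Scrawl (M : Matroid α) (W : Set α) : Prop :=
  ∃ S : Set (Set α), (∀ C ∈ S, M.Circuit C) ∧ W = ⋃₀ S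

/-- A matroid is tame if every circuit-cocircuit intersection is finite. -/
def Tame (M : Matroid α) : Prop :=
  ∀ C D, M.Circuit C → M.Cocircuit D → (C ∩ D).Finite

/-- A `k`-painting of a matroid: nonzero coefficients on each circuit and each
cocircuit such that each circuit-cocircuit pair is "orthogonal". -/
def IsPainting {k : Type*} [Field k] (M : Matroid α)
    (c : Set α → α → k) (d : Set α → α → k) : Prop :=
  (∀ C, M.Circuit C → ∀ e ∈ C, c C e ≠ 0) ∧
  (∀ D, M.Cocircuit D → ∀ e ∈ D, d D e ≠ 0) ∧
  (∀ C D, M.Circuit C → M.Cocircuit D →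
    (C ∩ D).Finite ∧ ∑ᶠ e ∈ C ∩ D, c C e * d D e = 0)

/-! ### Auxiliary lemmas -/

variable {M : Matroid α} {C D I X : Set α} {e : α}

lemma Circuit.dep' (hC : M.Circuit C) : M.Dep C := hC.1

lemma Circuit.subset_ground' (hC : M.Circuit C) : C ⊆ M.E := hC.1.subset_ground

lemma Circuit.ssubset_indep' (hC : M.Circuit C) (hX : X ⊂ C) : M.Indep X := by
  by_contra hi
  exact hX.ne (hC.2 X ⟨hi, hX.subset.trans hC.subset_ground'⟩ hX.subset)

lemma Circuit.diff_singleton_indep' (hC : M.Circuit C) (he : e ∈ C) : M.Indep (C \ {e}) :=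
  hC.ssubset_indep' (sdiff_singleton_ssubset.2 he)

lemma Circuit.mem_closure_diff_singleton' (hC : M.Circuit C) (he : e ∈ C) :
    e ∈ M.closure (C \ {e}) := by
  have hI := hC.diff_singleton_indep' he
  have hdep : M.Dep (insert e (C \ {e})) := by
    rw [insert_diff_singleton, insert_eq_of_mem he]; exact hC.1
  exact ((hI.insert_dep_iff).1 hdep).1

/-- Existence of a fundamental circuit. -/
lemma exists_circuit_of_mem_closure' (hI : M.Indep I) (heI : e ∉ I) (he : e ∈ M.closure I) :
    ∃ C, M.Circuit C ∧ e ∈ C ∧ C ⊆ insert e I := by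
  set Js : Set (Set α) := {J | J ⊆ I ∧ e ∈ M.closure J} with hJs
  have hne : Js.Nonempty := ⟨I, Subset.rfl, he⟩
  have hsub : ∀ J ∈ Js, J ⊆ I := fun J hJ ↦ hJ.1
  have hcl : e ∈ M.closure (⋂₀ Js) := by
    rw [hI.closure_sInter_eq_biInter_closure_of_forall_subset hne hsub]
    exact mem_iInter₂.2 fun J hJ ↦ hJ.2
  set J₀ := ⋂₀ Js with hJ₀
  have hJ₀I : J₀ ⊆ I := sInter_subset_of_mem ⟨Subset.rfl, he⟩
  have hJ₀i : M.Indep J₀ := hI.subset hJ₀I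
  have heJ₀ : e ∉ J₀ := fun h ↦ heI (hJ₀I h)
  refine ⟨insert e J₀, ⟨hJ₀i.insert_dep_iff.2 ⟨hcl, heJ₀⟩, ?_⟩,
    mem_insert _ _, insert_subset_insert hJ₀I⟩
  intro X hX hXs
  have heX : e ∈ X := by
    by_contra heX
    refine hX.not_indep (hJ₀i.subset (fun a ha ↦ ?_))
    exact (hXs ha).resolve_left (by rintro rfl; exact heX ha)
  have hXe : X \ {e} ⊆ J₀ := fun a ha ↦ (hXs ha.1).resolve_left ha.2
  have hXe_i : M.Indep (X \ {e}) := hJ₀i.subset hXe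
  have hdep : M.Dep (insert e (X \ {e})) := by
    rwa [insert_diff_singleton, insert_eq_of_mem heX]
  have hecl : e ∈ M.closure (X \ {e}) := (hXe_i.insert_dep_iff.1 hdep).1
  have hJX : J₀ ⊆ X \ {e} := sInter_subset_of_mem ⟨hXe.trans hJ₀I, hecl⟩
  exact subset_antisymm hXs (insert_subset heX (hJX.trans diff_subset))

lemma Cocircuit.subset_ground'' (hD : M.Cocircuit D) : D ⊆ M.E := by
  have := hD.1.subset_ground
  rwa [dual_ground] at this

lemma Cocircuit.spanning_insert_compl' (hD : M.Cocircuit D) (he : e ∈ D) :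
    M.Spanning (insert e (M.E \ D)) := by
  have hDE : D ⊆ M.E := hD.subset_ground''
  have heE : e ∈ M.E := hDE he
  have hcoind : M.Coindep (D \ {e}) :=
    coindep_def.2 (hD.ssubset_indep' (sdiff_singleton_ssubset.2 he))
  have hsp := hcoind.compl_spanning
  have hED : M.E \ (D \ {e}) = insert e (M.E \ D) := by
    ext a
    simp only [mem_diff, mem_singleton_iff, mem_insert_iff, not_and, not_not]
    constructor
    · rintro ⟨haE, h2⟩
      by_cases haD : a ∈ D
      · exact Or.inl (h2 haD)
      · exact Or.inr ⟨haE, haD⟩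
    · rintro (rfl | ⟨haE, haD⟩)
      · exact ⟨heE, fun _ ↦ rfl⟩
      · exact ⟨haE, fun h ↦ absurd h haD⟩
  rwa [hED] at hsp

lemma Cocircuit.not_mem_closure_compl' (hD : M.Cocircuit D) (he : e ∈ D) :
    e ∉ M.closure (M.E \ D) := by
  intro hecl
  have hnsp : ¬ M.Spanning (M.E \ D) := by
    intro hsp
    exact hD.1.not_indep ((coindep_iff_compl_spanning hD.subset_ground'').2 hsp).indep
  have hsp := hD.spanning_insert_compl' he
  rw [spanning_iff_closure_eq] at hsp
  rw [spanning_iff_closure_eq, ← closure_insert_eq_of_mem_closure hecl, hsp] at hnsp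
  exact hnsp rfl

lemma Circuit.inter_cocircuit_ne_singleton' (hC : M.Circuit C) (hD : M.Cocircuit D) :
    C ∩ D ≠ {e} := by
  intro h
  have he : e ∈ C ∩ D := h ▸ rfl
  have hsub : C \ {e} ⊆ M.E \ D := by
    rintro a ⟨haC, hae⟩
    refine ⟨hC.subset_ground' haC, fun haD ↦ hae ?_⟩
    have : a ∈ C ∩ D := ⟨haC, haD⟩
    rwa [h] at this
  exact hD.not_mem_closure_compl' he.2
    (M.closure_subset_closure hsub (hC.mem_closure_diff_singleton' he.1))

end Matroid

/-- If the symmetric difference of any two circuits is empty or contains a circuit,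
then no circuit meets a cocircuit in exactly three elements. -/
theorem stmt9 {α : Type*} (M : Matroid α)
    (h : ∀ C₁ C₂, M.Circuit C₁ → M.Circuit C₂ →
      symmDiff C₁ C₂ = ∅ ∨ ∃ C, M.Circuit C ∧ C ⊆ symmDiff C₁ C₂) :
    ¬ ∃ C D, M.Circuit C ∧ M.Cocircuit D ∧ (C ∩ D).ncard = 3 := by
  rintro ⟨C, D, hC, hD, hcard⟩
  obtain ⟨x, y, z, hxy, hxz, hyz, hCD⟩ := Set.ncard_eq_three.1 hcard
  have hDE : D ⊆ M.E := hD.subset_ground''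
  have hx : x ∈ C ∩ D := by rw [hCD]; exact Or.inl rfl
  have hy : y ∈ C ∩ D := by rw [hCD]; exact Or.inr (Or.inl rfl)
  have hz : z ∈ C ∩ D := by rw [hCD]; exact Or.inr (Or.inr rfl)
  set H : Set α := M.E \ D with hH
  -- a basis `B` of `H` containing `C \ D`
  have hCDind : M.Indep (C \ D) := (hC.diff_singleton_indep' hx.1).subset
    (fun a ha ↦ ⟨ha.1, fun hex ↦ ha.2 (mem_singleton_iff.1 hex ▸ hx.2)⟩)
  have hCDH : C \ D ⊆ H := fun a ha ↦ ⟨hC.subset_ground' ha.1, ha.2⟩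
  obtain ⟨B, hB, hCB⟩ := hCDind.subset_isBasis_of_subset hCDH diff_subset
  have hBH : B ⊆ H := hB.subset
  have hBi : M.Indep B := hB.indep
  have hclB : x ∉ M.closure B := fun hmem ↦
    hD.not_mem_closure_compl' hx.2 (M.closure_subset_closure hBH hmem)
  have hxB : x ∉ B := fun hmem ↦ (hBH hmem).2 hx.2
  have hB'i : M.Indep (insert x B) := by
    rw [hBi.insert_indep_iff_of_notMem hxB]
    exact ⟨hDE hx.2, hclB⟩
  -- `insert x B` is spanning, so `y` is in its closure
  have hsp : M.Spanning (insert x H) := hD.spanning_insert_compl' hx.2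
  have hycl : y ∈ M.closure (insert x B) := by
    have h1 : insert x H ⊆ M.closure (insert x B) :=
      insert_subset (M.subset_closure _ hB'i.subset_ground (mem_insert _ _))
        ((hB.subset_closure).trans (M.closure_subset_closure (subset_insert _ _)))
    have h2 : M.closure (insert x H) ⊆ M.closure (insert x B) := by
      have := M.closure_subset_closure h1
      rwa [Matroid.closure_closure] at this
    rw [Matroid.spanning_iff_closure_eq] at hsp
    exact h2 (hsp ▸ hDE hy.2)
  have hyB' : y ∉ insert x B := by
    rintro (rfl | hmem)
    · exact hxy rfl
    · exact (hBH hmem).2 hy.2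
  -- the fundamental circuit `Cy` of `y` with respect to `insert x B`
  obtain ⟨Cy, hCy, hyCy, hCysub⟩ := Matroid.exists_circuit_of_mem_closure' hB'i hyB' hycl
  have hCyD : Cy ∩ D ⊆ {x, y} := by
    rintro a ⟨haCy, haD⟩
    rcases hCysub haCy with rfl | (rfl | haB)
    · exact Or.inr rfl
    · exact Or.inl rfl
    · exact absurd haD (hBH haB).2
  have hxCy : x ∈ Cy := by
    by_contra hxCy
    refine hCy.inter_cocircuit_ne_singleton' hD (e := y) (subset_antisymm ?_ ?_)
    · rintro a ha
      rcases hCyD ha with rfl | rfl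
      · exact absurd ha.1 hxCy
      · rfl
    · rintro a rfl
      exact ⟨hyCy, hy.2⟩
  have hzCy : z ∉ Cy := by
    intro hmem
    rcases hCysub hmem with rfl | (rfl | hmem')
    · exact hyz rfl
    · exact hxz rfl
    · exact (hBH hmem').2 hz.2
  -- apply the hypothesis to `C` and `Cy`
  rcases h C Cy hC hCy with hemp | ⟨C₀, hC₀, hC₀sub⟩
  · have hzmem : z ∈ symmDiff C Cy := Set.mem_symmDiff.2 (Or.inl ⟨hz.1, hzCy⟩)
    rw [hemp] at hzmem
    exact hzmem
  · have hsubD : C₀ ∩ D ⊆ {z} := by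
      rintro a ⟨haC₀, haD⟩
      rcases Set.mem_symmDiff.1 (hC₀sub haC₀) with ⟨haC, haCy⟩ | ⟨haCy, haC⟩
      · have haCD : a ∈ C ∩ D := ⟨haC, haD⟩
        rw [hCD] at haCD
        rcases haCD with rfl | (rfl | rfl)
        · exact absurd hxCy haCy
        · exact absurd hyCy haCy
        · rfl
      · rcases hCyD ⟨haCy, haD⟩ with rfl | rfl
        · exact absurd hx.1 haC
        · exact absurd hy.1 haC
    have hC₀B : C₀ \ D ⊆ B := by
      rintro a ⟨haC₀, haD⟩
      rcases Set.mem_symmDiff.1 (hC₀sub haC₀) with ⟨haC, _⟩ | ⟨haCy, _⟩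
      · exact hCB ⟨haC, haD⟩
      · rcases hCysub haCy with rfl | (rfl | hmem)
        · exact absurd hy.2 haD
        · exact absurd hx.2 haD
        · exact hmem
    rcases subset_singleton_iff_eq.1 hsubD with h0 | h0
    · have hsub : C₀ ⊆ B := fun a ha ↦ hC₀B ⟨ha, fun haD ↦ by
        have : a ∈ C₀ ∩ D := ⟨ha, haD⟩
        rw [h0] at this
        exact this⟩
      exact hC₀.dep'.not_indep (hBi.subset hsub)
    · exact hC₀.inter_cocircuit_ne_singleton' hD h0
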